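/- Suppose in addition that (i) a1*a2*b1*b2*c1*c2 ≠ 0; (ii) for j = 1,2, aj is not equal to any of b1, -b1, b2, -b2, c1, -c1, c2, -c2, and bj is not equal to any of c1, -c1, c2, -c2; (iii) none of a1^2, b1^2, c1^2 equals 1/2; (iv) at most one of the three elements w*y-3*x*z, x*y+w*z, w^2+3*x^2-y^2-3*z^2 is zero. Then every 7x7 matrix A over K satisfying A*PhiS = PhiS*A and A*PhiR = PhiR*A is a scalar multiple of the 7x7 identity matrix; in particular the corresponding representation of the modular group is indecomposable. -/
import Mathlib


open Matrix

/-- The image of the order-2 generator `S` of the modular group under the paper's family of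
representations into `G₂`. -/
def PhiS {K : Type*} [Field K] (a1 a2 b1 b2 c1 c2 : K) : Matrix (Fin 7) (Fin 7) K :=
  !![a1^2 - a2^2, 0, 0, 0, 2*a1*a2, 0, 0;
     0, b1^2 - b2^2, 0, 0, 0, 2*b1*b2, 0;
     0, 0, c1^2 - c2^2, 0, 0, 0, 2*c1*c2;
     0, 0, 0, -1, 0, 0, 0;
     2*a1*a2, 0, 0, 0, a2^2 - a1^2, 0, 0;
     0, 2*b1*b2, 0, 0, 0, b2^2 - b1^2, 0;
     0, 0, 2*c1*c2, 0, 0, 0, c2^2 - c1^2]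

/-- The image of the order-3 generator `R` of the modular group under the paper's family of
representations into `G₂`. -/
def PhiR {K : Type*} [Field K] (w x y z : K) : Matrix (Fin 7) (Fin 7) K :=
  !![1, 0, 0, 0, 0, 0, 0;
     0, 1, 0, 0, 0, 0, 0;
     0, 0, 1, 0, 0, 0, 0;
     0, 0, 0, -(1/2), -(3/2)*(w^2 + 3*x^2 - y^2 - 3*z^2), -3*(x*y + w*z), 3*(w*y - 3*x*z);
     0, 0, 0, (1/2)*(w^2 + 3*x^2 - y^2 - 3*z^2), -(1/2), w*y - 3*x*z, 3*(x*y + w*z);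
     0, 0, 0, 3*(x*y + w*z), -3*(w*y - 3*x*z), -(1/2), -(3/2)*(w^2 + 3*x^2 - y^2 - 3*z^2);
     0, 0, 0, -(w*y - 3*x*z), -3*(x*y + w*z), (1/2)*(w^2 + 3*x^2 - y^2 - 3*z^2), -(1/2)]

@[simp] lemma vecHead_constant {α : Type*} {n : ℕ} (a : α) : Matrix.vecHead (fun _ : Fin (n+1) => a) = a := rfl
@[simp] lemma vecTail_constant {α : Type*} {n : ℕ} (a : α) : Matrix.vecTail (fun _ : Fin (n+1) => a) = (fun _ : Fin n => a) := rfl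

@[simp] lemma cons_val_five7 {α : Type*} (x : α) (u : Fin 6 → α) : Matrix.vecCons x u 5 = u 4 := rfl
@[simp] lemma cons_val_six7 {α : Type*} (x : α) (u : Fin 6 → α) : Matrix.vecCons x u 6 = u 5 := rfl
@[simp] lemma cons_val_five6 {α : Type*} (x : α) (u : Fin 5 → α) : Matrix.vecCons x u 5 = u 4 := rfl

private lemma mulz {K : Type*} [Field K] {c x : K} (hc : c ≠ 0) (h : c * x = 0) : x = 0 :=
  (mul_eq_zero.mp h).resolve_left hc

private lemma cancel7 {K : Type*} [Field K] {c u v : K} (hc : c ≠ 0) (h : c * (u - v) = 0) : u = v :=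
  sub_eq_zero.mp (mulz hc h)

set_option maxHeartbeats 10000000 in
/-- Under conditions (i)-(iv), every matrix commuting with both `PhiS` and `PhiR` is scalar;
in particular the representation is indecomposable. -/
theorem stmt0 {K : Type*} [Field K] (hchar2 : (2 : K) ≠ 0) (hchar3 : (3 : K) ≠ 0)
    (a1 a2 b1 b2 c1 c2 w x y z : K)
    (hC1a : a1^2 + a2^2 = 1) (hC1b : b1^2 + b2^2 = 1) (hC1c : c1^2 + c2^2 = 1)
    (hC2 : w^2 + 3*x^2 + y^2 + 3*z^2 = 1)
    (hC3 : !![a1, -a2; a2, a1] * !![b1, -b2; b2, b1] * !![c1, -c2; c2, c1] = 1)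
    (hi : a1*a2*b1*b2*c1*c2 ≠ 0)
    (hii1 : a1 ∉ ({b1, -b1, b2, -b2, c1, -c1, c2, -c2} : Set K))
    (hii2 : a2 ∉ ({b1, -b1, b2, -b2, c1, -c1, c2, -c2} : Set K))
    (hii3 : b1 ∉ ({c1, -c1, c2, -c2} : Set K))
    (hii4 : b2 ∉ ({c1, -c1, c2, -c2} : Set K))
    (hiii1 : a1^2 ≠ 1/2) (hiii2 : b1^2 ≠ 1/2) (hiii3 : c1^2 ≠ 1/2)
    (hiv1 : ¬(w*y - 3*x*z = 0 ∧ x*y + w*z = 0))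
    (hiv2 : ¬(w*y - 3*x*z = 0 ∧ w^2 + 3*x^2 - y^2 - 3*z^2 = 0))
    (hiv3 : ¬(x*y + w*z = 0 ∧ w^2 + 3*x^2 - y^2 - 3*z^2 = 0)) :
    ∀ A : Matrix (Fin 7) (Fin 7) K,
      A * PhiS a1 a2 b1 b2 c1 c2 = PhiS a1 a2 b1 b2 c1 c2 * A →
      A * PhiR w x y z = PhiR w x y z * A →
      ∃ k : K, A = k • (1 : Matrix (Fin 7) (Fin 7) K) := by
  intro A hS hR
  have hu : 2 * (2:K)⁻¹ = 1 := mul_inv_cancel₀ hchar2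
  simp only [Set.mem_insert_iff, Set.mem_singleton_iff, not_or] at hii1 hii2 hii3 hii4
  obtain ⟨hab1, hanb1, hab2, hanb2, hac1, hanc1, hac2, hanc2⟩ := hii1
  obtain ⟨hbc1, hbnc1, hbc2, hbnc2⟩ := hii3
  have ha1 : a1 ≠ 0 := fun h => hi (by rw [h]; ring)
  have ha2 : a2 ≠ 0 := fun h => hi (by rw [h]; ring)
  have hb1 : b1 ≠ 0 := fun h => hi (by rw [h]; ring)
  have hb2 : b2 ≠ 0 := fun h => hi (by rw [h]; ring)
  have hc1 : c1 ≠ 0 := fun h => hi (by rw [h]; ring)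
  have hc2v : c2 ≠ 0 := fun h => hi (by rw [h]; ring)
  have n_ab : ((a1^2 - a2^2) - (b1^2 - b2^2)) ≠ 0 := by
    have e : (a1^2 - a2^2) - (b1^2 - b2^2) = 2*((a1 - b1)*(a1 + b1)) := by linear_combination hC1b - hC1a
    rw [e]
    exact mul_ne_zero hchar2 (mul_ne_zero (sub_ne_zero.mpr hab1) (fun hh => hanb1 (by linear_combination hh)))
  have n_ac : ((a1^2 - a2^2) - (c1^2 - c2^2)) ≠ 0 := by
    have e : (a1^2 - a2^2) - (c1^2 - c2^2) = 2*((a1 - c1)*(a1 + c1)) := by linear_combination hC1c - hC1a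
    rw [e]
    exact mul_ne_zero hchar2 (mul_ne_zero (sub_ne_zero.mpr hac1) (fun hh => hanc1 (by linear_combination hh)))
  have n_bc : ((b1^2 - b2^2) - (c1^2 - c2^2)) ≠ 0 := by
    have e : (b1^2 - b2^2) - (c1^2 - c2^2) = 2*((b1 - c1)*(b1 + c1)) := by linear_combination hC1c - hC1b
    rw [e]
    exact mul_ne_zero hchar2 (mul_ne_zero (sub_ne_zero.mpr hbc1) (fun hh => hbnc1 (by linear_combination hh)))
  have n1a : (1 - (a1^2 - a2^2)) ≠ 0 := by
    have e : 1 - (a1^2 - a2^2) = 2*(a2*a2) := by linear_combination -hC1a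
    rw [e]
    exact mul_ne_zero hchar2 (mul_ne_zero ha2 ha2)
  have n1b : (1 - (b1^2 - b2^2)) ≠ 0 := by
    have e : 1 - (b1^2 - b2^2) = 2*(b2*b2) := by linear_combination -hC1b
    rw [e]
    exact mul_ne_zero hchar2 (mul_ne_zero hb2 hb2)
  have n1c : (1 - (c1^2 - c2^2)) ≠ 0 := by
    have e : 1 - (c1^2 - c2^2) = 2*(c2*c2) := by linear_combination -hC1c
    rw [e]
    exact mul_ne_zero hchar2 (mul_ne_zero hc2v hc2v)
  have n2a : (2*a1*a2) ≠ 0 := mul_ne_zero (mul_ne_zero hchar2 ha1) ha2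
  have n2b : (2*b1*b2) ≠ 0 := mul_ne_zero (mul_ne_zero hchar2 hb1) hb2
  have n2c : (2*c1*c2) ≠ 0 := mul_ne_zero (mul_ne_zero hchar2 hc1) hc2v
  have n4K : (4:K) ≠ 0 := by rw [show (4:K) = 2*2 by norm_num]; exact mul_ne_zero hchar2 hchar2
  have n6K : (6:K) ≠ 0 := by rw [show (6:K) = 2*3 by norm_num]; exact mul_ne_zero hchar2 hchar3
  have n12K : (12:K) ≠ 0 := by rw [show (12:K) = 2*2*3 by norm_num]; exact mul_ne_zero (mul_ne_zero hchar2 hchar2) hchar3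
  have n48K : (48:K) ≠ 0 := by rw [show (48:K) = 2*2*2*2*3 by norm_num]; exact mul_ne_zero (mul_ne_zero (mul_ne_zero (mul_ne_zero hchar2 hchar2) hchar2) hchar2) hchar3
  have eR03 : A 0 3 * ((-2:K)) + A 0 4 * ((-6:K)*(z)^2 + (-2:K)*(y)^2 + (6:K)*(x)^2 + (2:K)*(w)^2) + A 0 5 * ((12:K)*(x)*(y) + (12:K)*(w)*(z)) + A 0 6 * ((12:K)*(x)*(z) + (-4:K)*(w)*(y)) = 4 * A 0 3 := by
    have h : (A * PhiR w x y z) 0 3 = (PhiR w x y z * A) 0 3 := by rw [hR]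
    simp [PhiR, Matrix.mul_apply, Fin.sum_univ_seven] at h
    first
    | linear_combination 4*h - ((-2:K)*(A 0 3) + (-6:K)*(z)^2*(A 0 4) + (-2:K)*(y)^2*(A 0 4) + (6:K)*(x)^2*(A 0 4) + (2:K)*(w)^2*(A 0 4))*hu
    | linear_combination -4*h - ((-2:K)*(A 0 3) + (-6:K)*(z)^2*(A 0 4) + (-2:K)*(y)^2*(A 0 4) + (6:K)*(x)^2*(A 0 4) + (2:K)*(w)^2*(A 0 4))*hu
  have eR04 : A 0 3 * ((18:K)*(z)^2 + (6:K)*(y)^2 + (-18:K)*(x)^2 + (-6:K)*(w)^2) + A 0 4 * ((-2:K)) + A 0 5 * ((36:K)*(x)*(z) + (-12:K)*(w)*(y)) + A 0 6 * ((-12:K)*(x)*(y) + (-12:K)*(w)*(z)) = 4 * A 0 4 := by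
    have h : (A * PhiR w x y z) 0 4 = (PhiR w x y z * A) 0 4 := by rw [hR]
    simp [PhiR, Matrix.mul_apply, Fin.sum_univ_seven] at h
    first
    | linear_combination 4*h - ((-2:K)*(A 0 4) + (18:K)*(z)^2*(A 0 3) + (6:K)*(y)^2*(A 0 3) + (-18:K)*(x)^2*(A 0 3) + (-6:K)*(w)^2*(A 0 3))*hu
    | linear_combination -4*h - ((-2:K)*(A 0 4) + (18:K)*(z)^2*(A 0 3) + (6:K)*(y)^2*(A 0 3) + (-18:K)*(x)^2*(A 0 3) + (-6:K)*(w)^2*(A 0 3))*hu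
  have eR05 : A 0 3 * ((-12:K)*(x)*(y) + (-12:K)*(w)*(z)) + A 0 4 * ((-12:K)*(x)*(z) + (4:K)*(w)*(y)) + A 0 5 * ((-2:K)) + A 0 6 * ((-6:K)*(z)^2 + (-2:K)*(y)^2 + (6:K)*(x)^2 + (2:K)*(w)^2) = 4 * A 0 5 := by
    have h : (A * PhiR w x y z) 0 5 = (PhiR w x y z * A) 0 5 := by rw [hR]
    simp [PhiR, Matrix.mul_apply, Fin.sum_univ_seven] at h
    first
    | linear_combination 4*h - ((-2:K)*(A 0 5) + (-6:K)*(z)^2*(A 0 6) + (-2:K)*(y)^2*(A 0 6) + (6:K)*(x)^2*(A 0 6) + (2:K)*(w)^2*(A 0 6))*hu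
    | linear_combination -4*h - ((-2:K)*(A 0 5) + (-6:K)*(z)^2*(A 0 6) + (-2:K)*(y)^2*(A 0 6) + (6:K)*(x)^2*(A 0 6) + (2:K)*(w)^2*(A 0 6))*hu
  have eR06 : A 0 3 * ((-36:K)*(x)*(z) + (12:K)*(w)*(y)) + A 0 4 * ((12:K)*(x)*(y) + (12:K)*(w)*(z)) + A 0 5 * ((18:K)*(z)^2 + (6:K)*(y)^2 + (-18:K)*(x)^2 + (-6:K)*(w)^2) + A 0 6 * ((-2:K)) = 4 * A 0 6 := by
    have h : (A * PhiR w x y z) 0 6 = (PhiR w x y z * A) 0 6 := by rw [hR]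
    simp [PhiR, Matrix.mul_apply, Fin.sum_univ_seven] at h
    first
    | linear_combination 4*h - ((-2:K)*(A 0 6) + (18:K)*(z)^2*(A 0 5) + (6:K)*(y)^2*(A 0 5) + (-18:K)*(x)^2*(A 0 5) + (-6:K)*(w)^2*(A 0 5))*hu
    | linear_combination -4*h - ((-2:K)*(A 0 6) + (18:K)*(z)^2*(A 0 5) + (6:K)*(y)^2*(A 0 5) + (-18:K)*(x)^2*(A 0 5) + (-6:K)*(w)^2*(A 0 5))*hu
  have eR13 : A 1 3 * ((-2:K)) + A 1 4 * ((-6:K)*(z)^2 + (-2:K)*(y)^2 + (6:K)*(x)^2 + (2:K)*(w)^2) + A 1 5 * ((12:K)*(x)*(y) + (12:K)*(w)*(z)) + A 1 6 * ((12:K)*(x)*(z) + (-4:K)*(w)*(y)) = 4 * A 1 3 := by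
    have h : (A * PhiR w x y z) 1 3 = (PhiR w x y z * A) 1 3 := by rw [hR]
    simp [PhiR, Matrix.mul_apply, Fin.sum_univ_seven] at h
    first
    | linear_combination 4*h - ((-2:K)*(A 1 3) + (-6:K)*(z)^2*(A 1 4) + (-2:K)*(y)^2*(A 1 4) + (6:K)*(x)^2*(A 1 4) + (2:K)*(w)^2*(A 1 4))*hu
    | linear_combination -4*h - ((-2:K)*(A 1 3) + (-6:K)*(z)^2*(A 1 4) + (-2:K)*(y)^2*(A 1 4) + (6:K)*(x)^2*(A 1 4) + (2:K)*(w)^2*(A 1 4))*hu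
  have eR14 : A 1 3 * ((18:K)*(z)^2 + (6:K)*(y)^2 + (-18:K)*(x)^2 + (-6:K)*(w)^2) + A 1 4 * ((-2:K)) + A 1 5 * ((36:K)*(x)*(z) + (-12:K)*(w)*(y)) + A 1 6 * ((-12:K)*(x)*(y) + (-12:K)*(w)*(z)) = 4 * A 1 4 := by
    have h : (A * PhiR w x y z) 1 4 = (PhiR w x y z * A) 1 4 := by rw [hR]
    simp [PhiR, Matrix.mul_apply, Fin.sum_univ_seven] at h
    first
    | linear_combination 4*h - ((-2:K)*(A 1 4) + (18:K)*(z)^2*(A 1 3) + (6:K)*(y)^2*(A 1 3) + (-18:K)*(x)^2*(A 1 3) + (-6:K)*(w)^2*(A 1 3))*hu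
    | linear_combination -4*h - ((-2:K)*(A 1 4) + (18:K)*(z)^2*(A 1 3) + (6:K)*(y)^2*(A 1 3) + (-18:K)*(x)^2*(A 1 3) + (-6:K)*(w)^2*(A 1 3))*hu
  have eR15 : A 1 3 * ((-12:K)*(x)*(y) + (-12:K)*(w)*(z)) + A 1 4 * ((-12:K)*(x)*(z) + (4:K)*(w)*(y)) + A 1 5 * ((-2:K)) + A 1 6 * ((-6:K)*(z)^2 + (-2:K)*(y)^2 + (6:K)*(x)^2 + (2:K)*(w)^2) = 4 * A 1 5 := by
    have h : (A * PhiR w x y z) 1 5 = (PhiR w x y z * A) 1 5 := by rw [hR]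
    simp [PhiR, Matrix.mul_apply, Fin.sum_univ_seven] at h
    first
    | linear_combination 4*h - ((-2:K)*(A 1 5) + (-6:K)*(z)^2*(A 1 6) + (-2:K)*(y)^2*(A 1 6) + (6:K)*(x)^2*(A 1 6) + (2:K)*(w)^2*(A 1 6))*hu
    | linear_combination -4*h - ((-2:K)*(A 1 5) + (-6:K)*(z)^2*(A 1 6) + (-2:K)*(y)^2*(A 1 6) + (6:K)*(x)^2*(A 1 6) + (2:K)*(w)^2*(A 1 6))*hu
  have eR16 : A 1 3 * ((-36:K)*(x)*(z) + (12:K)*(w)*(y)) + A 1 4 * ((12:K)*(x)*(y) + (12:K)*(w)*(z)) + A 1 5 * ((18:K)*(z)^2 + (6:K)*(y)^2 + (-18:K)*(x)^2 + (-6:K)*(w)^2) + A 1 6 * ((-2:K)) = 4 * A 1 6 := by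
    have h : (A * PhiR w x y z) 1 6 = (PhiR w x y z * A) 1 6 := by rw [hR]
    simp [PhiR, Matrix.mul_apply, Fin.sum_univ_seven] at h
    first
    | linear_combination 4*h - ((-2:K)*(A 1 6) + (18:K)*(z)^2*(A 1 5) + (6:K)*(y)^2*(A 1 5) + (-18:K)*(x)^2*(A 1 5) + (-6:K)*(w)^2*(A 1 5))*hu
    | linear_combination -4*h - ((-2:K)*(A 1 6) + (18:K)*(z)^2*(A 1 5) + (6:K)*(y)^2*(A 1 5) + (-18:K)*(x)^2*(A 1 5) + (-6:K)*(w)^2*(A 1 5))*hu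
  have eR23 : A 2 3 * ((-2:K)) + A 2 4 * ((-6:K)*(z)^2 + (-2:K)*(y)^2 + (6:K)*(x)^2 + (2:K)*(w)^2) + A 2 5 * ((12:K)*(x)*(y) + (12:K)*(w)*(z)) + A 2 6 * ((12:K)*(x)*(z) + (-4:K)*(w)*(y)) = 4 * A 2 3 := by
    have h : (A * PhiR w x y z) 2 3 = (PhiR w x y z * A) 2 3 := by rw [hR]
    simp [PhiR, Matrix.mul_apply, Fin.sum_univ_seven] at h
    first
    | linear_combination 4*h - ((-2:K)*(A 2 3) + (-6:K)*(z)^2*(A 2 4) + (-2:K)*(y)^2*(A 2 4) + (6:K)*(x)^2*(A 2 4) + (2:K)*(w)^2*(A 2 4))*hu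
    | linear_combination -4*h - ((-2:K)*(A 2 3) + (-6:K)*(z)^2*(A 2 4) + (-2:K)*(y)^2*(A 2 4) + (6:K)*(x)^2*(A 2 4) + (2:K)*(w)^2*(A 2 4))*hu
  have eR24 : A 2 3 * ((18:K)*(z)^2 + (6:K)*(y)^2 + (-18:K)*(x)^2 + (-6:K)*(w)^2) + A 2 4 * ((-2:K)) + A 2 5 * ((36:K)*(x)*(z) + (-12:K)*(w)*(y)) + A 2 6 * ((-12:K)*(x)*(y) + (-12:K)*(w)*(z)) = 4 * A 2 4 := by
    have h : (A * PhiR w x y z) 2 4 = (PhiR w x y z * A) 2 4 := by rw [hR]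
    simp [PhiR, Matrix.mul_apply, Fin.sum_univ_seven] at h
    first
    | linear_combination 4*h - ((-2:K)*(A 2 4) + (18:K)*(z)^2*(A 2 3) + (6:K)*(y)^2*(A 2 3) + (-18:K)*(x)^2*(A 2 3) + (-6:K)*(w)^2*(A 2 3))*hu
    | linear_combination -4*h - ((-2:K)*(A 2 4) + (18:K)*(z)^2*(A 2 3) + (6:K)*(y)^2*(A 2 3) + (-18:K)*(x)^2*(A 2 3) + (-6:K)*(w)^2*(A 2 3))*hu
  have eR25 : A 2 3 * ((-12:K)*(x)*(y) + (-12:K)*(w)*(z)) + A 2 4 * ((-12:K)*(x)*(z) + (4:K)*(w)*(y)) + A 2 5 * ((-2:K)) + A 2 6 * ((-6:K)*(z)^2 + (-2:K)*(y)^2 + (6:K)*(x)^2 + (2:K)*(w)^2) = 4 * A 2 5 := by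
    have h : (A * PhiR w x y z) 2 5 = (PhiR w x y z * A) 2 5 := by rw [hR]
    simp [PhiR, Matrix.mul_apply, Fin.sum_univ_seven] at h
    first
    | linear_combination 4*h - ((-2:K)*(A 2 5) + (-6:K)*(z)^2*(A 2 6) + (-2:K)*(y)^2*(A 2 6) + (6:K)*(x)^2*(A 2 6) + (2:K)*(w)^2*(A 2 6))*hu
    | linear_combination -4*h - ((-2:K)*(A 2 5) + (-6:K)*(z)^2*(A 2 6) + (-2:K)*(y)^2*(A 2 6) + (6:K)*(x)^2*(A 2 6) + (2:K)*(w)^2*(A 2 6))*hu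
  have eR26 : A 2 3 * ((-36:K)*(x)*(z) + (12:K)*(w)*(y)) + A 2 4 * ((12:K)*(x)*(y) + (12:K)*(w)*(z)) + A 2 5 * ((18:K)*(z)^2 + (6:K)*(y)^2 + (-18:K)*(x)^2 + (-6:K)*(w)^2) + A 2 6 * ((-2:K)) = 4 * A 2 6 := by
    have h : (A * PhiR w x y z) 2 6 = (PhiR w x y z * A) 2 6 := by rw [hR]
    simp [PhiR, Matrix.mul_apply, Fin.sum_univ_seven] at h
    first
    | linear_combination 4*h - ((-2:K)*(A 2 6) + (18:K)*(z)^2*(A 2 5) + (6:K)*(y)^2*(A 2 5) + (-18:K)*(x)^2*(A 2 5) + (-6:K)*(w)^2*(A 2 5))*hu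
    | linear_combination -4*h - ((-2:K)*(A 2 6) + (18:K)*(z)^2*(A 2 5) + (6:K)*(y)^2*(A 2 5) + (-18:K)*(x)^2*(A 2 5) + (-6:K)*(w)^2*(A 2 5))*hu
  have eR30 : 4 * A 3 0 = ((-2:K)) * A 3 0 + ((18:K)*(z)^2 + (6:K)*(y)^2 + (-18:K)*(x)^2 + (-6:K)*(w)^2) * A 4 0 + ((-12:K)*(x)*(y) + (-12:K)*(w)*(z)) * A 5 0 + ((-36:K)*(x)*(z) + (12:K)*(w)*(y)) * A 6 0 := by
    have h : (A * PhiR w x y z) 3 0 = (PhiR w x y z * A) 3 0 := by rw [hR]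
    simp [PhiR, Matrix.mul_apply, Fin.sum_univ_seven] at h
    first
    | linear_combination 4*h - ((2:K)*(A 3 0) + (-18:K)*(z)^2*(A 4 0) + (-6:K)*(y)^2*(A 4 0) + (18:K)*(x)^2*(A 4 0) + (6:K)*(w)^2*(A 4 0))*hu
    | linear_combination -4*h - ((2:K)*(A 3 0) + (-18:K)*(z)^2*(A 4 0) + (-6:K)*(y)^2*(A 4 0) + (18:K)*(x)^2*(A 4 0) + (6:K)*(w)^2*(A 4 0))*hu
  have eR31 : 4 * A 3 1 = ((-2:K)) * A 3 1 + ((18:K)*(z)^2 + (6:K)*(y)^2 + (-18:K)*(x)^2 + (-6:K)*(w)^2) * A 4 1 + ((-12:K)*(x)*(y) + (-12:K)*(w)*(z)) * A 5 1 + ((-36:K)*(x)*(z) + (12:K)*(w)*(y)) * A 6 1 := by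
    have h : (A * PhiR w x y z) 3 1 = (PhiR w x y z * A) 3 1 := by rw [hR]
    simp [PhiR, Matrix.mul_apply, Fin.sum_univ_seven] at h
    first
    | linear_combination 4*h - ((2:K)*(A 3 1) + (-18:K)*(z)^2*(A 4 1) + (-6:K)*(y)^2*(A 4 1) + (18:K)*(x)^2*(A 4 1) + (6:K)*(w)^2*(A 4 1))*hu
    | linear_combination -4*h - ((2:K)*(A 3 1) + (-18:K)*(z)^2*(A 4 1) + (-6:K)*(y)^2*(A 4 1) + (18:K)*(x)^2*(A 4 1) + (6:K)*(w)^2*(A 4 1))*hu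
  have eR32 : 4 * A 3 2 = ((-2:K)) * A 3 2 + ((18:K)*(z)^2 + (6:K)*(y)^2 + (-18:K)*(x)^2 + (-6:K)*(w)^2) * A 4 2 + ((-12:K)*(x)*(y) + (-12:K)*(w)*(z)) * A 5 2 + ((-36:K)*(x)*(z) + (12:K)*(w)*(y)) * A 6 2 := by
    have h : (A * PhiR w x y z) 3 2 = (PhiR w x y z * A) 3 2 := by rw [hR]
    simp [PhiR, Matrix.mul_apply, Fin.sum_univ_seven] at h
    first
    | linear_combination 4*h - ((2:K)*(A 3 2) + (-18:K)*(z)^2*(A 4 2) + (-6:K)*(y)^2*(A 4 2) + (18:K)*(x)^2*(A 4 2) + (6:K)*(w)^2*(A 4 2))*hu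
    | linear_combination -4*h - ((2:K)*(A 3 2) + (-18:K)*(z)^2*(A 4 2) + (-6:K)*(y)^2*(A 4 2) + (18:K)*(x)^2*(A 4 2) + (6:K)*(w)^2*(A 4 2))*hu
  have eR40 : 4 * A 4 0 = ((-6:K)*(z)^2 + (-2:K)*(y)^2 + (6:K)*(x)^2 + (2:K)*(w)^2) * A 3 0 + ((-2:K)) * A 4 0 + ((-12:K)*(x)*(z) + (4:K)*(w)*(y)) * A 5 0 + ((12:K)*(x)*(y) + (12:K)*(w)*(z)) * A 6 0 := by
    have h : (A * PhiR w x y z) 4 0 = (PhiR w x y z * A) 4 0 := by rw [hR]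
    simp [PhiR, Matrix.mul_apply, Fin.sum_univ_seven] at h
    first
    | linear_combination 4*h - ((2:K)*(A 4 0) + (6:K)*(z)^2*(A 3 0) + (2:K)*(y)^2*(A 3 0) + (-6:K)*(x)^2*(A 3 0) + (-2:K)*(w)^2*(A 3 0))*hu
    | linear_combination -4*h - ((2:K)*(A 4 0) + (6:K)*(z)^2*(A 3 0) + (2:K)*(y)^2*(A 3 0) + (-6:K)*(x)^2*(A 3 0) + (-2:K)*(w)^2*(A 3 0))*hu
  have eR41 : 4 * A 4 1 = ((-6:K)*(z)^2 + (-2:K)*(y)^2 + (6:K)*(x)^2 + (2:K)*(w)^2) * A 3 1 + ((-2:K)) * A 4 1 + ((-12:K)*(x)*(z) + (4:K)*(w)*(y)) * A 5 1 + ((12:K)*(x)*(y) + (12:K)*(w)*(z)) * A 6 1 := by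
    have h : (A * PhiR w x y z) 4 1 = (PhiR w x y z * A) 4 1 := by rw [hR]
    simp [PhiR, Matrix.mul_apply, Fin.sum_univ_seven] at h
    first
    | linear_combination 4*h - ((2:K)*(A 4 1) + (6:K)*(z)^2*(A 3 1) + (2:K)*(y)^2*(A 3 1) + (-6:K)*(x)^2*(A 3 1) + (-2:K)*(w)^2*(A 3 1))*hu
    | linear_combination -4*h - ((2:K)*(A 4 1) + (6:K)*(z)^2*(A 3 1) + (2:K)*(y)^2*(A 3 1) + (-6:K)*(x)^2*(A 3 1) + (-2:K)*(w)^2*(A 3 1))*hu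
  have eR42 : 4 * A 4 2 = ((-6:K)*(z)^2 + (-2:K)*(y)^2 + (6:K)*(x)^2 + (2:K)*(w)^2) * A 3 2 + ((-2:K)) * A 4 2 + ((-12:K)*(x)*(z) + (4:K)*(w)*(y)) * A 5 2 + ((12:K)*(x)*(y) + (12:K)*(w)*(z)) * A 6 2 := by
    have h : (A * PhiR w x y z) 4 2 = (PhiR w x y z * A) 4 2 := by rw [hR]
    simp [PhiR, Matrix.mul_apply, Fin.sum_univ_seven] at h
    first
    | linear_combination 4*h - ((2:K)*(A 4 2) + (6:K)*(z)^2*(A 3 2) + (2:K)*(y)^2*(A 3 2) + (-6:K)*(x)^2*(A 3 2) + (-2:K)*(w)^2*(A 3 2))*hu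
    | linear_combination -4*h - ((2:K)*(A 4 2) + (6:K)*(z)^2*(A 3 2) + (2:K)*(y)^2*(A 3 2) + (-6:K)*(x)^2*(A 3 2) + (-2:K)*(w)^2*(A 3 2))*hu
  have eR50 : 4 * A 5 0 = ((12:K)*(x)*(y) + (12:K)*(w)*(z)) * A 3 0 + ((36:K)*(x)*(z) + (-12:K)*(w)*(y)) * A 4 0 + ((-2:K)) * A 5 0 + ((18:K)*(z)^2 + (6:K)*(y)^2 + (-18:K)*(x)^2 + (-6:K)*(w)^2) * A 6 0 := by
    have h : (A * PhiR w x y z) 5 0 = (PhiR w x y z * A) 5 0 := by rw [hR]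
    simp [PhiR, Matrix.mul_apply, Fin.sum_univ_seven] at h
    first
    | linear_combination 4*h - ((2:K)*(A 5 0) + (-18:K)*(z)^2*(A 6 0) + (-6:K)*(y)^2*(A 6 0) + (18:K)*(x)^2*(A 6 0) + (6:K)*(w)^2*(A 6 0))*hu
    | linear_combination -4*h - ((2:K)*(A 5 0) + (-18:K)*(z)^2*(A 6 0) + (-6:K)*(y)^2*(A 6 0) + (18:K)*(x)^2*(A 6 0) + (6:K)*(w)^2*(A 6 0))*hu
  have eR51 : 4 * A 5 1 = ((12:K)*(x)*(y) + (12:K)*(w)*(z)) * A 3 1 + ((36:K)*(x)*(z) + (-12:K)*(w)*(y)) * A 4 1 + ((-2:K)) * A 5 1 + ((18:K)*(z)^2 + (6:K)*(y)^2 + (-18:K)*(x)^2 + (-6:K)*(w)^2) * A 6 1 := by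
    have h : (A * PhiR w x y z) 5 1 = (PhiR w x y z * A) 5 1 := by rw [hR]
    simp [PhiR, Matrix.mul_apply, Fin.sum_univ_seven] at h
    first
    | linear_combination 4*h - ((2:K)*(A 5 1) + (-18:K)*(z)^2*(A 6 1) + (-6:K)*(y)^2*(A 6 1) + (18:K)*(x)^2*(A 6 1) + (6:K)*(w)^2*(A 6 1))*hu
    | linear_combination -4*h - ((2:K)*(A 5 1) + (-18:K)*(z)^2*(A 6 1) + (-6:K)*(y)^2*(A 6 1) + (18:K)*(x)^2*(A 6 1) + (6:K)*(w)^2*(A 6 1))*hu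
  have eR52 : 4 * A 5 2 = ((12:K)*(x)*(y) + (12:K)*(w)*(z)) * A 3 2 + ((36:K)*(x)*(z) + (-12:K)*(w)*(y)) * A 4 2 + ((-2:K)) * A 5 2 + ((18:K)*(z)^2 + (6:K)*(y)^2 + (-18:K)*(x)^2 + (-6:K)*(w)^2) * A 6 2 := by
    have h : (A * PhiR w x y z) 5 2 = (PhiR w x y z * A) 5 2 := by rw [hR]
    simp [PhiR, Matrix.mul_apply, Fin.sum_univ_seven] at h
    first
    | linear_combination 4*h - ((2:K)*(A 5 2) + (-18:K)*(z)^2*(A 6 2) + (-6:K)*(y)^2*(A 6 2) + (18:K)*(x)^2*(A 6 2) + (6:K)*(w)^2*(A 6 2))*hu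
    | linear_combination -4*h - ((2:K)*(A 5 2) + (-18:K)*(z)^2*(A 6 2) + (-6:K)*(y)^2*(A 6 2) + (18:K)*(x)^2*(A 6 2) + (6:K)*(w)^2*(A 6 2))*hu
  have eR60 : 4 * A 6 0 = ((12:K)*(x)*(z) + (-4:K)*(w)*(y)) * A 3 0 + ((-12:K)*(x)*(y) + (-12:K)*(w)*(z)) * A 4 0 + ((-6:K)*(z)^2 + (-2:K)*(y)^2 + (6:K)*(x)^2 + (2:K)*(w)^2) * A 5 0 + ((-2:K)) * A 6 0 := by
    have h : (A * PhiR w x y z) 6 0 = (PhiR w x y z * A) 6 0 := by rw [hR]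
    simp [PhiR, Matrix.mul_apply, Fin.sum_univ_seven] at h
    first
    | linear_combination 4*h - ((2:K)*(A 6 0) + (6:K)*(z)^2*(A 5 0) + (2:K)*(y)^2*(A 5 0) + (-6:K)*(x)^2*(A 5 0) + (-2:K)*(w)^2*(A 5 0))*hu
    | linear_combination -4*h - ((2:K)*(A 6 0) + (6:K)*(z)^2*(A 5 0) + (2:K)*(y)^2*(A 5 0) + (-6:K)*(x)^2*(A 5 0) + (-2:K)*(w)^2*(A 5 0))*hu
  have eR61 : 4 * A 6 1 = ((12:K)*(x)*(z) + (-4:K)*(w)*(y)) * A 3 1 + ((-12:K)*(x)*(y) + (-12:K)*(w)*(z)) * A 4 1 + ((-6:K)*(z)^2 + (-2:K)*(y)^2 + (6:K)*(x)^2 + (2:K)*(w)^2) * A 5 1 + ((-2:K)) * A 6 1 := by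
    have h : (A * PhiR w x y z) 6 1 = (PhiR w x y z * A) 6 1 := by rw [hR]
    simp [PhiR, Matrix.mul_apply, Fin.sum_univ_seven] at h
    first
    | linear_combination 4*h - ((2:K)*(A 6 1) + (6:K)*(z)^2*(A 5 1) + (2:K)*(y)^2*(A 5 1) + (-6:K)*(x)^2*(A 5 1) + (-2:K)*(w)^2*(A 5 1))*hu
    | linear_combination -4*h - ((2:K)*(A 6 1) + (6:K)*(z)^2*(A 5 1) + (2:K)*(y)^2*(A 5 1) + (-6:K)*(x)^2*(A 5 1) + (-2:K)*(w)^2*(A 5 1))*hu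
  have eR62 : 4 * A 6 2 = ((12:K)*(x)*(z) + (-4:K)*(w)*(y)) * A 3 2 + ((-12:K)*(x)*(y) + (-12:K)*(w)*(z)) * A 4 2 + ((-6:K)*(z)^2 + (-2:K)*(y)^2 + (6:K)*(x)^2 + (2:K)*(w)^2) * A 5 2 + ((-2:K)) * A 6 2 := by
    have h : (A * PhiR w x y z) 6 2 = (PhiR w x y z * A) 6 2 := by rw [hR]
    simp [PhiR, Matrix.mul_apply, Fin.sum_univ_seven] at h
    first
    | linear_combination 4*h - ((2:K)*(A 6 2) + (6:K)*(z)^2*(A 5 2) + (2:K)*(y)^2*(A 5 2) + (-6:K)*(x)^2*(A 5 2) + (-2:K)*(w)^2*(A 5 2))*hu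
    | linear_combination -4*h - ((2:K)*(A 6 2) + (6:K)*(z)^2*(A 5 2) + (2:K)*(y)^2*(A 5 2) + (-6:K)*(x)^2*(A 5 2) + (-2:K)*(w)^2*(A 5 2))*hu
  have eR34 : A 3 3 * ((18:K)*(z)^2 + (6:K)*(y)^2 + (-18:K)*(x)^2 + (-6:K)*(w)^2) + A 3 4 * ((-2:K)) + A 3 5 * ((36:K)*(x)*(z) + (-12:K)*(w)*(y)) + A 3 6 * ((-12:K)*(x)*(y) + (-12:K)*(w)*(z)) = ((-2:K)) * A 3 4 + ((18:K)*(z)^2 + (6:K)*(y)^2 + (-18:K)*(x)^2 + (-6:K)*(w)^2) * A 4 4 + ((-12:K)*(x)*(y) + (-12:K)*(w)*(z)) * A 5 4 + ((-36:K)*(x)*(z) + (12:K)*(w)*(y)) * A 6 4 := by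
    have h : (A * PhiR w x y z) 3 4 = (PhiR w x y z * A) 3 4 := by rw [hR]
    simp [PhiR, Matrix.mul_apply, Fin.sum_univ_seven] at h
    first
    | linear_combination 4*h - ((-18:K)*(z)^2*(A 4 4) + (18:K)*(z)^2*(A 3 3) + (-6:K)*(y)^2*(A 4 4) + (6:K)*(y)^2*(A 3 3) + (18:K)*(x)^2*(A 4 4) + (-18:K)*(x)^2*(A 3 3) + (6:K)*(w)^2*(A 4 4) + (-6:K)*(w)^2*(A 3 3))*hu
    | linear_combination -4*h - ((-18:K)*(z)^2*(A 4 4) + (18:K)*(z)^2*(A 3 3) + (-6:K)*(y)^2*(A 4 4) + (6:K)*(y)^2*(A 3 3) + (18:K)*(x)^2*(A 4 4) + (-18:K)*(x)^2*(A 3 3) + (6:K)*(w)^2*(A 4 4) + (-6:K)*(w)^2*(A 3 3))*hu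
  have eR35 : A 3 3 * ((-12:K)*(x)*(y) + (-12:K)*(w)*(z)) + A 3 4 * ((-12:K)*(x)*(z) + (4:K)*(w)*(y)) + A 3 5 * ((-2:K)) + A 3 6 * ((-6:K)*(z)^2 + (-2:K)*(y)^2 + (6:K)*(x)^2 + (2:K)*(w)^2) = ((-2:K)) * A 3 5 + ((18:K)*(z)^2 + (6:K)*(y)^2 + (-18:K)*(x)^2 + (-6:K)*(w)^2) * A 4 5 + ((-12:K)*(x)*(y) + (-12:K)*(w)*(z)) * A 5 5 + ((-36:K)*(x)*(z) + (12:K)*(w)*(y)) * A 6 5 := by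
    have h : (A * PhiR w x y z) 3 5 = (PhiR w x y z * A) 3 5 := by rw [hR]
    simp [PhiR, Matrix.mul_apply, Fin.sum_univ_seven] at h
    first
    | linear_combination 4*h - ((-18:K)*(z)^2*(A 4 5) + (-6:K)*(z)^2*(A 3 6) + (-6:K)*(y)^2*(A 4 5) + (-2:K)*(y)^2*(A 3 6) + (18:K)*(x)^2*(A 4 5) + (6:K)*(x)^2*(A 3 6) + (6:K)*(w)^2*(A 4 5) + (2:K)*(w)^2*(A 3 6))*hu
    | linear_combination -4*h - ((-18:K)*(z)^2*(A 4 5) + (-6:K)*(z)^2*(A 3 6) + (-6:K)*(y)^2*(A 4 5) + (-2:K)*(y)^2*(A 3 6) + (18:K)*(x)^2*(A 4 5) + (6:K)*(x)^2*(A 3 6) + (6:K)*(w)^2*(A 4 5) + (2:K)*(w)^2*(A 3 6))*hu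
  have eR36 : A 3 3 * ((-36:K)*(x)*(z) + (12:K)*(w)*(y)) + A 3 4 * ((12:K)*(x)*(y) + (12:K)*(w)*(z)) + A 3 5 * ((18:K)*(z)^2 + (6:K)*(y)^2 + (-18:K)*(x)^2 + (-6:K)*(w)^2) + A 3 6 * ((-2:K)) = ((-2:K)) * A 3 6 + ((18:K)*(z)^2 + (6:K)*(y)^2 + (-18:K)*(x)^2 + (-6:K)*(w)^2) * A 4 6 + ((-12:K)*(x)*(y) + (-12:K)*(w)*(z)) * A 5 6 + ((-36:K)*(x)*(z) + (12:K)*(w)*(y)) * A 6 6 := by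
    have h : (A * PhiR w x y z) 3 6 = (PhiR w x y z * A) 3 6 := by rw [hR]
    simp [PhiR, Matrix.mul_apply, Fin.sum_univ_seven] at h
    first
    | linear_combination 4*h - ((-18:K)*(z)^2*(A 4 6) + (18:K)*(z)^2*(A 3 5) + (-6:K)*(y)^2*(A 4 6) + (6:K)*(y)^2*(A 3 5) + (18:K)*(x)^2*(A 4 6) + (-18:K)*(x)^2*(A 3 5) + (6:K)*(w)^2*(A 4 6) + (-6:K)*(w)^2*(A 3 5))*hu
    | linear_combination -4*h - ((-18:K)*(z)^2*(A 4 6) + (18:K)*(z)^2*(A 3 5) + (-6:K)*(y)^2*(A 4 6) + (6:K)*(y)^2*(A 3 5) + (18:K)*(x)^2*(A 4 6) + (-18:K)*(x)^2*(A 3 5) + (6:K)*(w)^2*(A 4 6) + (-6:K)*(w)^2*(A 3 5))*hu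
  have eR45 : A 4 3 * ((-12:K)*(x)*(y) + (-12:K)*(w)*(z)) + A 4 4 * ((-12:K)*(x)*(z) + (4:K)*(w)*(y)) + A 4 5 * ((-2:K)) + A 4 6 * ((-6:K)*(z)^2 + (-2:K)*(y)^2 + (6:K)*(x)^2 + (2:K)*(w)^2) = ((-6:K)*(z)^2 + (-2:K)*(y)^2 + (6:K)*(x)^2 + (2:K)*(w)^2) * A 3 5 + ((-2:K)) * A 4 5 + ((-12:K)*(x)*(z) + (4:K)*(w)*(y)) * A 5 5 + ((12:K)*(x)*(y) + (12:K)*(w)*(z)) * A 6 5 := by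
    have h : (A * PhiR w x y z) 4 5 = (PhiR w x y z * A) 4 5 := by rw [hR]
    simp [PhiR, Matrix.mul_apply, Fin.sum_univ_seven] at h
    first
    | linear_combination 4*h - ((-6:K)*(z)^2*(A 4 6) + (6:K)*(z)^2*(A 3 5) + (-2:K)*(y)^2*(A 4 6) + (2:K)*(y)^2*(A 3 5) + (6:K)*(x)^2*(A 4 6) + (-6:K)*(x)^2*(A 3 5) + (2:K)*(w)^2*(A 4 6) + (-2:K)*(w)^2*(A 3 5))*hu
    | linear_combination -4*h - ((-6:K)*(z)^2*(A 4 6) + (6:K)*(z)^2*(A 3 5) + (-2:K)*(y)^2*(A 4 6) + (2:K)*(y)^2*(A 3 5) + (6:K)*(x)^2*(A 4 6) + (-6:K)*(x)^2*(A 3 5) + (2:K)*(w)^2*(A 4 6) + (-2:K)*(w)^2*(A 3 5))*hu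
  have eR46 : A 4 3 * ((-36:K)*(x)*(z) + (12:K)*(w)*(y)) + A 4 4 * ((12:K)*(x)*(y) + (12:K)*(w)*(z)) + A 4 5 * ((18:K)*(z)^2 + (6:K)*(y)^2 + (-18:K)*(x)^2 + (-6:K)*(w)^2) + A 4 6 * ((-2:K)) = ((-6:K)*(z)^2 + (-2:K)*(y)^2 + (6:K)*(x)^2 + (2:K)*(w)^2) * A 3 6 + ((-2:K)) * A 4 6 + ((-12:K)*(x)*(z) + (4:K)*(w)*(y)) * A 5 6 + ((12:K)*(x)*(y) + (12:K)*(w)*(z)) * A 6 6 := by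
    have h : (A * PhiR w x y z) 4 6 = (PhiR w x y z * A) 4 6 := by rw [hR]
    simp [PhiR, Matrix.mul_apply, Fin.sum_univ_seven] at h
    first
    | linear_combination 4*h - ((18:K)*(z)^2*(A 4 5) + (6:K)*(z)^2*(A 3 6) + (6:K)*(y)^2*(A 4 5) + (2:K)*(y)^2*(A 3 6) + (-18:K)*(x)^2*(A 4 5) + (-6:K)*(x)^2*(A 3 6) + (-6:K)*(w)^2*(A 4 5) + (-2:K)*(w)^2*(A 3 6))*hu
    | linear_combination -4*h - ((18:K)*(z)^2*(A 4 5) + (6:K)*(z)^2*(A 3 6) + (6:K)*(y)^2*(A 4 5) + (2:K)*(y)^2*(A 3 6) + (-18:K)*(x)^2*(A 4 5) + (-6:K)*(x)^2*(A 3 6) + (-6:K)*(w)^2*(A 4 5) + (-2:K)*(w)^2*(A 3 6))*hu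
  have eR56 : A 5 3 * ((-36:K)*(x)*(z) + (12:K)*(w)*(y)) + A 5 4 * ((12:K)*(x)*(y) + (12:K)*(w)*(z)) + A 5 5 * ((18:K)*(z)^2 + (6:K)*(y)^2 + (-18:K)*(x)^2 + (-6:K)*(w)^2) + A 5 6 * ((-2:K)) = ((12:K)*(x)*(y) + (12:K)*(w)*(z)) * A 3 6 + ((36:K)*(x)*(z) + (-12:K)*(w)*(y)) * A 4 6 + ((-2:K)) * A 5 6 + ((18:K)*(z)^2 + (6:K)*(y)^2 + (-18:K)*(x)^2 + (-6:K)*(w)^2) * A 6 6 := by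
    have h : (A * PhiR w x y z) 5 6 = (PhiR w x y z * A) 5 6 := by rw [hR]
    simp [PhiR, Matrix.mul_apply, Fin.sum_univ_seven] at h
    first
    | linear_combination 4*h - ((-18:K)*(z)^2*(A 6 6) + (18:K)*(z)^2*(A 5 5) + (-6:K)*(y)^2*(A 6 6) + (6:K)*(y)^2*(A 5 5) + (18:K)*(x)^2*(A 6 6) + (-18:K)*(x)^2*(A 5 5) + (6:K)*(w)^2*(A 6 6) + (-6:K)*(w)^2*(A 5 5))*hu
    | linear_combination -4*h - ((-18:K)*(z)^2*(A 6 6) + (18:K)*(z)^2*(A 5 5) + (-6:K)*(y)^2*(A 6 6) + (6:K)*(y)^2*(A 5 5) + (18:K)*(x)^2*(A 6 6) + (-18:K)*(x)^2*(A 5 5) + (6:K)*(w)^2*(A 6 6) + (-6:K)*(w)^2*(A 5 5))*hu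
  have eS01 : A 0 1 * (b1^2 - b2^2) + A 0 5 * (2*b1*b2) = (a1^2 - a2^2) * A 0 1 + (2*a1*a2) * A 4 1 := by
    have h : (A * PhiS a1 a2 b1 b2 c1 c2) 0 1 = (PhiS a1 a2 b1 b2 c1 c2 * A) 0 1 := by rw [hS]
    simp [PhiS, Matrix.mul_apply, Fin.sum_univ_seven] at h
    first
    | linear_combination h
    | linear_combination -h
  have eS10 : A 1 0 * (a1^2 - a2^2) + A 1 4 * (2*a1*a2) = (b1^2 - b2^2) * A 1 0 + (2*b1*b2) * A 5 0 := by
    have h : (A * PhiS a1 a2 b1 b2 c1 c2) 1 0 = (PhiS a1 a2 b1 b2 c1 c2 * A) 1 0 := by rw [hS]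
    simp [PhiS, Matrix.mul_apply, Fin.sum_univ_seven] at h
    first
    | linear_combination h
    | linear_combination -h
  have eS02 : A 0 2 * (c1^2 - c2^2) + A 0 6 * (2*c1*c2) = (a1^2 - a2^2) * A 0 2 + (2*a1*a2) * A 4 2 := by
    have h : (A * PhiS a1 a2 b1 b2 c1 c2) 0 2 = (PhiS a1 a2 b1 b2 c1 c2 * A) 0 2 := by rw [hS]
    simp [PhiS, Matrix.mul_apply, Fin.sum_univ_seven] at h
    first
    | linear_combination h
    | linear_combination -h
  have eS20 : A 2 0 * (a1^2 - a2^2) + A 2 4 * (2*a1*a2) = (c1^2 - c2^2) * A 2 0 + (2*c1*c2) * A 6 0 := by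
    have h : (A * PhiS a1 a2 b1 b2 c1 c2) 2 0 = (PhiS a1 a2 b1 b2 c1 c2 * A) 2 0 := by rw [hS]
    simp [PhiS, Matrix.mul_apply, Fin.sum_univ_seven] at h
    first
    | linear_combination h
    | linear_combination -h
  have eS12 : A 1 2 * (c1^2 - c2^2) + A 1 6 * (2*c1*c2) = (b1^2 - b2^2) * A 1 2 + (2*b1*b2) * A 5 2 := by
    have h : (A * PhiS a1 a2 b1 b2 c1 c2) 1 2 = (PhiS a1 a2 b1 b2 c1 c2 * A) 1 2 := by rw [hS]
    simp [PhiS, Matrix.mul_apply, Fin.sum_univ_seven] at h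
    first
    | linear_combination h
    | linear_combination -h
  have eS21 : A 2 1 * (b1^2 - b2^2) + A 2 5 * (2*b1*b2) = (c1^2 - c2^2) * A 2 1 + (2*c1*c2) * A 6 1 := by
    have h : (A * PhiS a1 a2 b1 b2 c1 c2) 2 1 = (PhiS a1 a2 b1 b2 c1 c2 * A) 2 1 := by rw [hS]
    simp [PhiS, Matrix.mul_apply, Fin.sum_univ_seven] at h
    first
    | linear_combination h
    | linear_combination -h
  have eS45 : A 4 1 * (2*b1*b2) + A 4 5 * (b2^2 - b1^2) = (2*a1*a2) * A 0 5 + (a2^2 - a1^2) * A 4 5 := by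
    have h : (A * PhiS a1 a2 b1 b2 c1 c2) 4 5 = (PhiS a1 a2 b1 b2 c1 c2 * A) 4 5 := by rw [hS]
    simp [PhiS, Matrix.mul_apply, Fin.sum_univ_seven] at h
    first
    | linear_combination h
    | linear_combination -h
  have eS54 : A 5 0 * (2*a1*a2) + A 5 4 * (a2^2 - a1^2) = (2*b1*b2) * A 1 4 + (b2^2 - b1^2) * A 5 4 := by
    have h : (A * PhiS a1 a2 b1 b2 c1 c2) 5 4 = (PhiS a1 a2 b1 b2 c1 c2 * A) 5 4 := by rw [hS]
    simp [PhiS, Matrix.mul_apply, Fin.sum_univ_seven] at h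
    first
    | linear_combination h
    | linear_combination -h
  have eS46 : A 4 2 * (2*c1*c2) + A 4 6 * (c2^2 - c1^2) = (2*a1*a2) * A 0 6 + (a2^2 - a1^2) * A 4 6 := by
    have h : (A * PhiS a1 a2 b1 b2 c1 c2) 4 6 = (PhiS a1 a2 b1 b2 c1 c2 * A) 4 6 := by rw [hS]
    simp [PhiS, Matrix.mul_apply, Fin.sum_univ_seven] at h
    first
    | linear_combination h
    | linear_combination -h
  have eS64 : A 6 0 * (2*a1*a2) + A 6 4 * (a2^2 - a1^2) = (2*c1*c2) * A 2 4 + (c2^2 - c1^2) * A 6 4 := by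
    have h : (A * PhiS a1 a2 b1 b2 c1 c2) 6 4 = (PhiS a1 a2 b1 b2 c1 c2 * A) 6 4 := by rw [hS]
    simp [PhiS, Matrix.mul_apply, Fin.sum_univ_seven] at h
    first
    | linear_combination h
    | linear_combination -h
  have eS56 : A 5 2 * (2*c1*c2) + A 5 6 * (c2^2 - c1^2) = (2*b1*b2) * A 1 6 + (b2^2 - b1^2) * A 5 6 := by
    have h : (A * PhiS a1 a2 b1 b2 c1 c2) 5 6 = (PhiS a1 a2 b1 b2 c1 c2 * A) 5 6 := by rw [hS]
    simp [PhiS, Matrix.mul_apply, Fin.sum_univ_seven] at h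
    first
    | linear_combination h
    | linear_combination -h
  have eS65 : A 6 1 * (2*b1*b2) + A 6 5 * (b2^2 - b1^2) = (2*c1*c2) * A 2 5 + (c2^2 - c1^2) * A 6 5 := by
    have h : (A * PhiS a1 a2 b1 b2 c1 c2) 6 5 = (PhiS a1 a2 b1 b2 c1 c2 * A) 6 5 := by rw [hS]
    simp [PhiS, Matrix.mul_apply, Fin.sum_univ_seven] at h
    first
    | linear_combination h
    | linear_combination -h
  have eS34 : A 3 0 * (2*a1*a2) + A 3 4 * (a2^2 - a1^2) = (-1) * A 3 4 := by
    have h : (A * PhiS a1 a2 b1 b2 c1 c2) 3 4 = (PhiS a1 a2 b1 b2 c1 c2 * A) 3 4 := by rw [hS]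
    simp [PhiS, Matrix.mul_apply, Fin.sum_univ_seven] at h
    first
    | linear_combination h
    | linear_combination -h
  have eS43 : A 4 3 * (-1) = (2*a1*a2) * A 0 3 + (a2^2 - a1^2) * A 4 3 := by
    have h : (A * PhiS a1 a2 b1 b2 c1 c2) 4 3 = (PhiS a1 a2 b1 b2 c1 c2 * A) 4 3 := by rw [hS]
    simp [PhiS, Matrix.mul_apply, Fin.sum_univ_seven] at h
    first
    | linear_combination h
    | linear_combination -h
  have eS35 : A 3 1 * (2*b1*b2) + A 3 5 * (b2^2 - b1^2) = (-1) * A 3 5 := by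
    have h : (A * PhiS a1 a2 b1 b2 c1 c2) 3 5 = (PhiS a1 a2 b1 b2 c1 c2 * A) 3 5 := by rw [hS]
    simp [PhiS, Matrix.mul_apply, Fin.sum_univ_seven] at h
    first
    | linear_combination h
    | linear_combination -h
  have eS53 : A 5 3 * (-1) = (2*b1*b2) * A 1 3 + (b2^2 - b1^2) * A 5 3 := by
    have h : (A * PhiS a1 a2 b1 b2 c1 c2) 5 3 = (PhiS a1 a2 b1 b2 c1 c2 * A) 5 3 := by rw [hS]
    simp [PhiS, Matrix.mul_apply, Fin.sum_univ_seven] at h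
    first
    | linear_combination h
    | linear_combination -h
  have eS36 : A 3 2 * (2*c1*c2) + A 3 6 * (c2^2 - c1^2) = (-1) * A 3 6 := by
    have h : (A * PhiS a1 a2 b1 b2 c1 c2) 3 6 = (PhiS a1 a2 b1 b2 c1 c2 * A) 3 6 := by rw [hS]
    simp [PhiS, Matrix.mul_apply, Fin.sum_univ_seven] at h
    first
    | linear_combination h
    | linear_combination -h
  have eS63 : A 6 3 * (-1) = (2*c1*c2) * A 2 3 + (c2^2 - c1^2) * A 6 3 := by
    have h : (A * PhiS a1 a2 b1 b2 c1 c2) 6 3 = (PhiS a1 a2 b1 b2 c1 c2 * A) 6 3 := by rw [hS]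
    simp [PhiS, Matrix.mul_apply, Fin.sum_univ_seven] at h
    first
    | linear_combination h
    | linear_combination -h
  have eS04 : A 0 0 * (2*a1*a2) + A 0 4 * (a2^2 - a1^2) = (a1^2 - a2^2) * A 0 4 + (2*a1*a2) * A 4 4 := by
    have h : (A * PhiS a1 a2 b1 b2 c1 c2) 0 4 = (PhiS a1 a2 b1 b2 c1 c2 * A) 0 4 := by rw [hS]
    simp [PhiS, Matrix.mul_apply, Fin.sum_univ_seven] at h
    first
    | linear_combination h
    | linear_combination -h
  have eS15 : A 1 1 * (2*b1*b2) + A 1 5 * (b2^2 - b1^2) = (b1^2 - b2^2) * A 1 5 + (2*b1*b2) * A 5 5 := by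
    have h : (A * PhiS a1 a2 b1 b2 c1 c2) 1 5 = (PhiS a1 a2 b1 b2 c1 c2 * A) 1 5 := by rw [hS]
    simp [PhiS, Matrix.mul_apply, Fin.sum_univ_seven] at h
    first
    | linear_combination h
    | linear_combination -h
  have eS26 : A 2 2 * (2*c1*c2) + A 2 6 * (c2^2 - c1^2) = (c1^2 - c2^2) * A 2 6 + (2*c1*c2) * A 6 6 := by
    have h : (A * PhiS a1 a2 b1 b2 c1 c2) 2 6 = (PhiS a1 a2 b1 b2 c1 c2 * A) 2 6 := by rw [hS]
    simp [PhiS, Matrix.mul_apply, Fin.sum_univ_seven] at h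
    first
    | linear_combination h
    | linear_combination -h
  have h48z03 : (48:K) * A 0 3 = 0 := by linear_combination (((-6:K))) * eR03 + (((6:K)*(z)^2 + (2:K)*(y)^2 + (-6:K)*(x)^2 + (-2:K)*(w)^2)) * eR04 + (((-12:K)*(x)*(y) + (-12:K)*(w)*(z))) * eR05 + (((-12:K)*(x)*(z) + (4:K)*(w)*(y))) * eR06 + (-12:K) * (w^2 + 3*x^2 + y^2 + 3*z^2 + 1) * (A 0 3) * hC2
  have z03 : A 0 3 = 0 := mulz n48K h48z03
  have h48z04 : (48:K) * A 0 4 = 0 := by linear_combination (((-18:K)*(z)^2 + (-6:K)*(y)^2 + (18:K)*(x)^2 + (6:K)*(w)^2)) * eR03 + (((-6:K))) * eR04 + (((-36:K)*(x)*(z) + (12:K)*(w)*(y))) * eR05 + (((12:K)*(x)*(y) + (12:K)*(w)*(z))) * eR06 + (-12:K) * (w^2 + 3*x^2 + y^2 + 3*z^2 + 1) * (A 0 4) * hC2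
  have z04 : A 0 4 = 0 := mulz n48K h48z04
  have h48z05 : (48:K) * A 0 5 = 0 := by linear_combination (((12:K)*(x)*(y) + (12:K)*(w)*(z))) * eR03 + (((12:K)*(x)*(z) + (-4:K)*(w)*(y))) * eR04 + (((-6:K))) * eR05 + (((6:K)*(z)^2 + (2:K)*(y)^2 + (-6:K)*(x)^2 + (-2:K)*(w)^2)) * eR06 + (-12:K) * (w^2 + 3*x^2 + y^2 + 3*z^2 + 1) * (A 0 5) * hC2
  have z05 : A 0 5 = 0 := mulz n48K h48z05
  have h48z06 : (48:K) * A 0 6 = 0 := by linear_combination (((36:K)*(x)*(z) + (-12:K)*(w)*(y))) * eR03 + (((-12:K)*(x)*(y) + (-12:K)*(w)*(z))) * eR04 + (((-18:K)*(z)^2 + (-6:K)*(y)^2 + (18:K)*(x)^2 + (6:K)*(w)^2)) * eR05 + (((-6:K))) * eR06 + (-12:K) * (w^2 + 3*x^2 + y^2 + 3*z^2 + 1) * (A 0 6) * hC2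
  have z06 : A 0 6 = 0 := mulz n48K h48z06
  have h48z13 : (48:K) * A 1 3 = 0 := by linear_combination (((-6:K))) * eR13 + (((6:K)*(z)^2 + (2:K)*(y)^2 + (-6:K)*(x)^2 + (-2:K)*(w)^2)) * eR14 + (((-12:K)*(x)*(y) + (-12:K)*(w)*(z))) * eR15 + (((-12:K)*(x)*(z) + (4:K)*(w)*(y))) * eR16 + (-12:K) * (w^2 + 3*x^2 + y^2 + 3*z^2 + 1) * (A 1 3) * hC2
  have z13 : A 1 3 = 0 := mulz n48K h48z13
  have h48z14 : (48:K) * A 1 4 = 0 := by linear_combination (((-18:K)*(z)^2 + (-6:K)*(y)^2 + (18:K)*(x)^2 + (6:K)*(w)^2)) * eR13 + (((-6:K))) * eR14 + (((-36:K)*(x)*(z) + (12:K)*(w)*(y))) * eR15 + (((12:K)*(x)*(y) + (12:K)*(w)*(z))) * eR16 + (-12:K) * (w^2 + 3*x^2 + y^2 + 3*z^2 + 1) * (A 1 4) * hC2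
  have z14 : A 1 4 = 0 := mulz n48K h48z14
  have h48z15 : (48:K) * A 1 5 = 0 := by linear_combination (((12:K)*(x)*(y) + (12:K)*(w)*(z))) * eR13 + (((12:K)*(x)*(z) + (-4:K)*(w)*(y))) * eR14 + (((-6:K))) * eR15 + (((6:K)*(z)^2 + (2:K)*(y)^2 + (-6:K)*(x)^2 + (-2:K)*(w)^2)) * eR16 + (-12:K) * (w^2 + 3*x^2 + y^2 + 3*z^2 + 1) * (A 1 5) * hC2
  have z15 : A 1 5 = 0 := mulz n48K h48z15
  have h48z16 : (48:K) * A 1 6 = 0 := by linear_combination (((36:K)*(x)*(z) + (-12:K)*(w)*(y))) * eR13 + (((-12:K)*(x)*(y) + (-12:K)*(w)*(z))) * eR14 + (((-18:K)*(z)^2 + (-6:K)*(y)^2 + (18:K)*(x)^2 + (6:K)*(w)^2)) * eR15 + (((-6:K))) * eR16 + (-12:K) * (w^2 + 3*x^2 + y^2 + 3*z^2 + 1) * (A 1 6) * hC2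
  have z16 : A 1 6 = 0 := mulz n48K h48z16
  have h48z23 : (48:K) * A 2 3 = 0 := by linear_combination (((-6:K))) * eR23 + (((6:K)*(z)^2 + (2:K)*(y)^2 + (-6:K)*(x)^2 + (-2:K)*(w)^2)) * eR24 + (((-12:K)*(x)*(y) + (-12:K)*(w)*(z))) * eR25 + (((-12:K)*(x)*(z) + (4:K)*(w)*(y))) * eR26 + (-12:K) * (w^2 + 3*x^2 + y^2 + 3*z^2 + 1) * (A 2 3) * hC2
  have z23 : A 2 3 = 0 := mulz n48K h48z23
  have h48z24 : (48:K) * A 2 4 = 0 := by linear_combination (((-18:K)*(z)^2 + (-6:K)*(y)^2 + (18:K)*(x)^2 + (6:K)*(w)^2)) * eR23 + (((-6:K))) * eR24 + (((-36:K)*(x)*(z) + (12:K)*(w)*(y))) * eR25 + (((12:K)*(x)*(y) + (12:K)*(w)*(z))) * eR26 + (-12:K) * (w^2 + 3*x^2 + y^2 + 3*z^2 + 1) * (A 2 4) * hC2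
  have z24 : A 2 4 = 0 := mulz n48K h48z24
  have h48z25 : (48:K) * A 2 5 = 0 := by linear_combination (((12:K)*(x)*(y) + (12:K)*(w)*(z))) * eR23 + (((12:K)*(x)*(z) + (-4:K)*(w)*(y))) * eR24 + (((-6:K))) * eR25 + (((6:K)*(z)^2 + (2:K)*(y)^2 + (-6:K)*(x)^2 + (-2:K)*(w)^2)) * eR26 + (-12:K) * (w^2 + 3*x^2 + y^2 + 3*z^2 + 1) * (A 2 5) * hC2
  have z25 : A 2 5 = 0 := mulz n48K h48z25
  have h48z26 : (48:K) * A 2 6 = 0 := by linear_combination (((36:K)*(x)*(z) + (-12:K)*(w)*(y))) * eR23 + (((-12:K)*(x)*(y) + (-12:K)*(w)*(z))) * eR24 + (((-18:K)*(z)^2 + (-6:K)*(y)^2 + (18:K)*(x)^2 + (6:K)*(w)^2)) * eR25 + (((-6:K))) * eR26 + (-12:K) * (w^2 + 3*x^2 + y^2 + 3*z^2 + 1) * (A 2 6) * hC2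
  have z26 : A 2 6 = 0 := mulz n48K h48z26
  have h48z30 : (48:K) * A 3 0 = 0 := by linear_combination (((6:K))) * eR30 + (((18:K)*(z)^2 + (6:K)*(y)^2 + (-18:K)*(x)^2 + (-6:K)*(w)^2)) * eR40 + (((-12:K)*(x)*(y) + (-12:K)*(w)*(z))) * eR50 + (((-36:K)*(x)*(z) + (12:K)*(w)*(y))) * eR60 + (-12:K) * (w^2 + 3*x^2 + y^2 + 3*z^2 + 1) * (A 3 0) * hC2
  have z30 : A 3 0 = 0 := mulz n48K h48z30
  have h48z31 : (48:K) * A 3 1 = 0 := by linear_combination (((6:K))) * eR31 + (((18:K)*(z)^2 + (6:K)*(y)^2 + (-18:K)*(x)^2 + (-6:K)*(w)^2)) * eR41 + (((-12:K)*(x)*(y) + (-12:K)*(w)*(z))) * eR51 + (((-36:K)*(x)*(z) + (12:K)*(w)*(y))) * eR61 + (-12:K) * (w^2 + 3*x^2 + y^2 + 3*z^2 + 1) * (A 3 1) * hC2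
  have z31 : A 3 1 = 0 := mulz n48K h48z31
  have h48z32 : (48:K) * A 3 2 = 0 := by linear_combination (((6:K))) * eR32 + (((18:K)*(z)^2 + (6:K)*(y)^2 + (-18:K)*(x)^2 + (-6:K)*(w)^2)) * eR42 + (((-12:K)*(x)*(y) + (-12:K)*(w)*(z))) * eR52 + (((-36:K)*(x)*(z) + (12:K)*(w)*(y))) * eR62 + (-12:K) * (w^2 + 3*x^2 + y^2 + 3*z^2 + 1) * (A 3 2) * hC2
  have z32 : A 3 2 = 0 := mulz n48K h48z32
  have h48z40 : (48:K) * A 4 0 = 0 := by linear_combination (((-6:K)*(z)^2 + (-2:K)*(y)^2 + (6:K)*(x)^2 + (2:K)*(w)^2)) * eR30 + (((6:K))) * eR40 + (((-12:K)*(x)*(z) + (4:K)*(w)*(y))) * eR50 + (((12:K)*(x)*(y) + (12:K)*(w)*(z))) * eR60 + (-12:K) * (w^2 + 3*x^2 + y^2 + 3*z^2 + 1) * (A 4 0) * hC2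
  have z40 : A 4 0 = 0 := mulz n48K h48z40
  have h48z41 : (48:K) * A 4 1 = 0 := by linear_combination (((-6:K)*(z)^2 + (-2:K)*(y)^2 + (6:K)*(x)^2 + (2:K)*(w)^2)) * eR31 + (((6:K))) * eR41 + (((-12:K)*(x)*(z) + (4:K)*(w)*(y))) * eR51 + (((12:K)*(x)*(y) + (12:K)*(w)*(z))) * eR61 + (-12:K) * (w^2 + 3*x^2 + y^2 + 3*z^2 + 1) * (A 4 1) * hC2
  have z41 : A 4 1 = 0 := mulz n48K h48z41
  have h48z42 : (48:K) * A 4 2 = 0 := by linear_combination (((-6:K)*(z)^2 + (-2:K)*(y)^2 + (6:K)*(x)^2 + (2:K)*(w)^2)) * eR32 + (((6:K))) * eR42 + (((-12:K)*(x)*(z) + (4:K)*(w)*(y))) * eR52 + (((12:K)*(x)*(y) + (12:K)*(w)*(z))) * eR62 + (-12:K) * (w^2 + 3*x^2 + y^2 + 3*z^2 + 1) * (A 4 2) * hC2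
  have z42 : A 4 2 = 0 := mulz n48K h48z42
  have h48z50 : (48:K) * A 5 0 = 0 := by linear_combination (((12:K)*(x)*(y) + (12:K)*(w)*(z))) * eR30 + (((36:K)*(x)*(z) + (-12:K)*(w)*(y))) * eR40 + (((6:K))) * eR50 + (((18:K)*(z)^2 + (6:K)*(y)^2 + (-18:K)*(x)^2 + (-6:K)*(w)^2)) * eR60 + (-12:K) * (w^2 + 3*x^2 + y^2 + 3*z^2 + 1) * (A 5 0) * hC2
  have z50 : A 5 0 = 0 := mulz n48K h48z50
  have h48z51 : (48:K) * A 5 1 = 0 := by linear_combination (((12:K)*(x)*(y) + (12:K)*(w)*(z))) * eR31 + (((36:K)*(x)*(z) + (-12:K)*(w)*(y))) * eR41 + (((6:K))) * eR51 + (((18:K)*(z)^2 + (6:K)*(y)^2 + (-18:K)*(x)^2 + (-6:K)*(w)^2)) * eR61 + (-12:K) * (w^2 + 3*x^2 + y^2 + 3*z^2 + 1) * (A 5 1) * hC2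
  have z51 : A 5 1 = 0 := mulz n48K h48z51
  have h48z52 : (48:K) * A 5 2 = 0 := by linear_combination (((12:K)*(x)*(y) + (12:K)*(w)*(z))) * eR32 + (((36:K)*(x)*(z) + (-12:K)*(w)*(y))) * eR42 + (((6:K))) * eR52 + (((18:K)*(z)^2 + (6:K)*(y)^2 + (-18:K)*(x)^2 + (-6:K)*(w)^2)) * eR62 + (-12:K) * (w^2 + 3*x^2 + y^2 + 3*z^2 + 1) * (A 5 2) * hC2
  have z52 : A 5 2 = 0 := mulz n48K h48z52
  have h48z60 : (48:K) * A 6 0 = 0 := by linear_combination (((12:K)*(x)*(z) + (-4:K)*(w)*(y))) * eR30 + (((-12:K)*(x)*(y) + (-12:K)*(w)*(z))) * eR40 + (((-6:K)*(z)^2 + (-2:K)*(y)^2 + (6:K)*(x)^2 + (2:K)*(w)^2)) * eR50 + (((6:K))) * eR60 + (-12:K) * (w^2 + 3*x^2 + y^2 + 3*z^2 + 1) * (A 6 0) * hC2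
  have z60 : A 6 0 = 0 := mulz n48K h48z60
  have h48z61 : (48:K) * A 6 1 = 0 := by linear_combination (((12:K)*(x)*(z) + (-4:K)*(w)*(y))) * eR31 + (((-12:K)*(x)*(y) + (-12:K)*(w)*(z))) * eR41 + (((-6:K)*(z)^2 + (-2:K)*(y)^2 + (6:K)*(x)^2 + (2:K)*(w)^2)) * eR51 + (((6:K))) * eR61 + (-12:K) * (w^2 + 3*x^2 + y^2 + 3*z^2 + 1) * (A 6 1) * hC2
  have z61 : A 6 1 = 0 := mulz n48K h48z61
  have h48z62 : (48:K) * A 6 2 = 0 := by linear_combination (((12:K)*(x)*(z) + (-4:K)*(w)*(y))) * eR32 + (((-12:K)*(x)*(y) + (-12:K)*(w)*(z))) * eR42 + (((-6:K)*(z)^2 + (-2:K)*(y)^2 + (6:K)*(x)^2 + (2:K)*(w)^2)) * eR52 + (((6:K))) * eR62 + (-12:K) * (w^2 + 3*x^2 + y^2 + 3*z^2 + 1) * (A 6 2) * hC2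
  have z62 : A 6 2 = 0 := mulz n48K h48z62
  have hz01 : ((a1^2 - a2^2) - (b1^2 - b2^2)) * A 0 1 = 0 := by linear_combination -eS01 + ((2:K)*(b1)*(b2)) * z05 + ((-2:K)*(a1)*(a2)) * z41
  have z01 : A 0 1 = 0 := mulz n_ab hz01
  have hz10 : ((a1^2 - a2^2) - (b1^2 - b2^2)) * A 1 0 = 0 := by linear_combination eS10 + ((-2:K)*(a1)*(a2)) * z14 + ((2:K)*(b1)*(b2)) * z50
  have z10 : A 1 0 = 0 := mulz n_ab hz10
  have hz02 : ((a1^2 - a2^2) - (c1^2 - c2^2)) * A 0 2 = 0 := by linear_combination -eS02 + ((2:K)*(c1)*(c2)) * z06 + ((-2:K)*(a1)*(a2)) * z42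
  have z02 : A 0 2 = 0 := mulz n_ac hz02
  have hz20 : ((a1^2 - a2^2) - (c1^2 - c2^2)) * A 2 0 = 0 := by linear_combination eS20 + ((-2:K)*(a1)*(a2)) * z24 + ((2:K)*(c1)*(c2)) * z60
  have z20 : A 2 0 = 0 := mulz n_ac hz20
  have hz12 : ((b1^2 - b2^2) - (c1^2 - c2^2)) * A 1 2 = 0 := by linear_combination -eS12 + ((2:K)*(c1)*(c2)) * z16 + ((-2:K)*(b1)*(b2)) * z52
  have z12 : A 1 2 = 0 := mulz n_bc hz12
  have hz21 : ((b1^2 - b2^2) - (c1^2 - c2^2)) * A 2 1 = 0 := by linear_combination eS21 + ((-2:K)*(b1)*(b2)) * z25 + ((2:K)*(c1)*(c2)) * z61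
  have z21 : A 2 1 = 0 := mulz n_bc hz21
  have hz45 : ((a1^2 - a2^2) - (b1^2 - b2^2)) * A 4 5 = 0 := by linear_combination eS45 + ((-2:K)*(b1)*(b2)) * z41 + ((2:K)*(a1)*(a2)) * z05
  have z45 : A 4 5 = 0 := mulz n_ab hz45
  have hz54 : ((a1^2 - a2^2) - (b1^2 - b2^2)) * A 5 4 = 0 := by linear_combination -eS54 + ((2:K)*(a1)*(a2)) * z50 + ((-2:K)*(b1)*(b2)) * z14
  have z54 : A 5 4 = 0 := mulz n_ab hz54
  have hz46 : ((a1^2 - a2^2) - (c1^2 - c2^2)) * A 4 6 = 0 := by linear_combination eS46 + ((-2:K)*(c1)*(c2)) * z42 + ((2:K)*(a1)*(a2)) * z06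
  have z46 : A 4 6 = 0 := mulz n_ac hz46
  have hz64 : ((a1^2 - a2^2) - (c1^2 - c2^2)) * A 6 4 = 0 := by linear_combination -eS64 + ((2:K)*(a1)*(a2)) * z60 + ((-2:K)*(c1)*(c2)) * z24
  have z64 : A 6 4 = 0 := mulz n_ac hz64
  have hz56 : ((b1^2 - b2^2) - (c1^2 - c2^2)) * A 5 6 = 0 := by linear_combination eS56 + ((-2:K)*(c1)*(c2)) * z52 + ((2:K)*(b1)*(b2)) * z16
  have z56 : A 5 6 = 0 := mulz n_bc hz56
  have hz65 : ((b1^2 - b2^2) - (c1^2 - c2^2)) * A 6 5 = 0 := by linear_combination -eS65 + ((2:K)*(b1)*(b2)) * z61 + ((-2:K)*(c1)*(c2)) * z25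
  have z65 : A 6 5 = 0 := mulz n_bc hz65
  have hz34 : (1 - (a1^2 - a2^2)) * A 3 4 = 0 := by linear_combination eS34 + ((-2:K)*(a1)*(a2)) * z30
  have z34 : A 3 4 = 0 := mulz n1a hz34
  have hz43 : (1 - (a1^2 - a2^2)) * A 4 3 = 0 := by linear_combination -eS43 + ((-2:K)*(a1)*(a2)) * z03
  have z43 : A 4 3 = 0 := mulz n1a hz43
  have hz35 : (1 - (b1^2 - b2^2)) * A 3 5 = 0 := by linear_combination eS35 + ((-2:K)*(b1)*(b2)) * z31
  have z35 : A 3 5 = 0 := mulz n1b hz35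
  have hz53 : (1 - (b1^2 - b2^2)) * A 5 3 = 0 := by linear_combination -eS53 + ((-2:K)*(b1)*(b2)) * z13
  have z53 : A 5 3 = 0 := mulz n1b hz53
  have hz36 : (1 - (c1^2 - c2^2)) * A 3 6 = 0 := by linear_combination eS36 + ((-2:K)*(c1)*(c2)) * z32
  have z36 : A 3 6 = 0 := mulz n1c hz36
  have hz63 : (1 - (c1^2 - c2^2)) * A 6 3 = 0 := by linear_combination -eS63 + ((-2:K)*(c1)*(c2)) * z23
  have z63 : A 6 3 = 0 := mulz n1c hz63
  have hd04 : (2*a1*a2) * (A 4 4 - A 0 0) = 0 := by linear_combination -eS04 + ((2:K)*(a2)^2 + (-2:K)*(a1)^2) * z04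
  have d04 : A 4 4 = A 0 0 := cancel7 n2a hd04
  have hd15 : (2*b1*b2) * (A 5 5 - A 1 1) = 0 := by linear_combination -eS15 + ((2:K)*(b2)^2 + (-2:K)*(b1)^2) * z15
  have d15 : A 5 5 = A 1 1 := cancel7 n2b hd15
  have hd26 : (2*c1*c2) * (A 6 6 - A 2 2) = 0 := by linear_combination -eS26 + ((2:K)*(c2)^2 + (-2:K)*(c1)^2) * z26
  have d26 : A 6 6 = A 2 2 := cancel7 n2c hd26
  have hsf1 : (6:K) * (((w^2 + 3*x^2 - y^2 - 3*z^2)) * (A 3 3 - A 4 4)) = 0 := by linear_combination (-1:K) * eR34 + ((36:K)*(x)*(z) + (-12:K)*(w)*(y)) * z35 + ((-12:K)*(x)*(y) + (-12:K)*(w)*(z)) * z36 + ((12:K)*(x)*(y) + (12:K)*(w)*(z)) * z54 + ((36:K)*(x)*(z) + (-12:K)*(w)*(y)) * z64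
  have f1 : ((w^2 + 3*x^2 - y^2 - 3*z^2)) * (A 3 3 - A 4 4) = 0 := mulz n6K hsf1
  have hsf2 : (12:K) * (((x*y + w*z)) * (A 3 3 - A 5 5)) = 0 := by linear_combination (-1:K) * eR35 + ((-12:K)*(x)*(z) + (4:K)*(w)*(y)) * z34 + ((-6:K)*(z)^2 + (-2:K)*(y)^2 + (6:K)*(x)^2 + (2:K)*(w)^2) * z36 + ((-18:K)*(z)^2 + (-6:K)*(y)^2 + (18:K)*(x)^2 + (6:K)*(w)^2) * z45 + ((36:K)*(x)*(z) + (-12:K)*(w)*(y)) * z65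
  have f2 : ((x*y + w*z)) * (A 3 3 - A 5 5) = 0 := mulz n12K hsf2
  have hsf3 : (12:K) * (((w*y - 3*x*z)) * (A 3 3 - A 6 6)) = 0 := by linear_combination (1:K) * eR36 + ((-12:K)*(x)*(y) + (-12:K)*(w)*(z)) * z34 + ((-18:K)*(z)^2 + (-6:K)*(y)^2 + (18:K)*(x)^2 + (6:K)*(w)^2) * z35 + ((18:K)*(z)^2 + (6:K)*(y)^2 + (-18:K)*(x)^2 + (-6:K)*(w)^2) * z46 + ((-12:K)*(x)*(y) + (-12:K)*(w)*(z)) * z56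
  have f3 : ((w*y - 3*x*z)) * (A 3 3 - A 6 6) = 0 := mulz n12K hsf3
  have hsf4 : (4:K) * (((w*y - 3*x*z)) * (A 4 4 - A 5 5)) = 0 := by linear_combination (1:K) * eR45 + ((12:K)*(x)*(y) + (12:K)*(w)*(z)) * z43 + ((6:K)*(z)^2 + (2:K)*(y)^2 + (-6:K)*(x)^2 + (-2:K)*(w)^2) * z46 + ((-6:K)*(z)^2 + (-2:K)*(y)^2 + (6:K)*(x)^2 + (2:K)*(w)^2) * z35 + ((12:K)*(x)*(y) + (12:K)*(w)*(z)) * z65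
  have f4 : ((w*y - 3*x*z)) * (A 4 4 - A 5 5) = 0 := mulz n4K hsf4
  have hsf5 : (12:K) * (((x*y + w*z)) * (A 4 4 - A 6 6)) = 0 := by linear_combination (1:K) * eR46 + ((36:K)*(x)*(z) + (-12:K)*(w)*(y)) * z43 + ((-18:K)*(z)^2 + (-6:K)*(y)^2 + (18:K)*(x)^2 + (6:K)*(w)^2) * z45 + ((-6:K)*(z)^2 + (-2:K)*(y)^2 + (6:K)*(x)^2 + (2:K)*(w)^2) * z36 + ((-12:K)*(x)*(z) + (4:K)*(w)*(y)) * z56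
  have f5 : ((x*y + w*z)) * (A 4 4 - A 6 6) = 0 := mulz n12K hsf5
  have hsf6 : (6:K) * (((w^2 + 3*x^2 - y^2 - 3*z^2)) * (A 5 5 - A 6 6)) = 0 := by linear_combination (-1:K) * eR56 + ((-36:K)*(x)*(z) + (12:K)*(w)*(y)) * z53 + ((12:K)*(x)*(y) + (12:K)*(w)*(z)) * z54 + ((-12:K)*(x)*(y) + (-12:K)*(w)*(z)) * z36 + ((-36:K)*(x)*(z) + (12:K)*(w)*(y)) * z46
  have f6 : ((w^2 + 3*x^2 - y^2 - 3*z^2)) * (A 5 5 - A 6 6) = 0 := mulz n6K hsf6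
  have hd : A 4 4 = A 3 3 ∧ A 5 5 = A 3 3 ∧ A 6 6 = A 3 3 := by
    by_cases hq : w*y - 3*x*z = 0
    · have hp : x*y + w*z ≠ 0 := fun h => hiv1 ⟨hq, h⟩
      have hs : w^2 + 3*x^2 - y^2 - 3*z^2 ≠ 0 := fun h => hiv2 ⟨hq, h⟩
      have g1 := (cancel7 hs f1).symm
      have g2 := (cancel7 hp f2).symm
      exact ⟨g1, g2, (cancel7 hs f6).symm.trans g2⟩
    · have g3 := (cancel7 hq f3).symm
      have g12 := cancel7 hq f4
      by_cases hp : x*y + w*z = 0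
      · have hs : w^2 + 3*x^2 - y^2 - 3*z^2 ≠ 0 := fun h => hiv3 ⟨hp, h⟩
        have g1 := (cancel7 hs f1).symm
        exact ⟨g1, g12.symm.trans g1, g3⟩
      · have g2 := (cancel7 hp f2).symm
        exact ⟨g12.trans g2, g2, g3⟩
  obtain ⟨g44, g55, g66⟩ := hd
  have e44 : A 4 4 = A 0 0 := d04
  have e33 : A 3 3 = A 0 0 := g44.symm.trans d04
  have e55 : A 5 5 = A 0 0 := g55.trans e33
  have e66 : A 6 6 = A 0 0 := g66.trans e33
  have e11 : A 1 1 = A 0 0 := d15.symm.trans e55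
  have e22 : A 2 2 = A 0 0 := d26.symm.trans e66
  refine ⟨A 0 0, ?_⟩
  ext i j
  fin_cases i <;> fin_cases j <;>
    simp [Matrix.one_apply] <;>
    first | rfl | exact z01 | exact z02 | exact z03 | exact z04 | exact z05 | exact z06 | exact z10 | exact z12 | exact z13 | exact z14 | exact z15 | exact z16 | exact z20 | exact z21 | exact z23 | exact z24 | exact z25 | exact z26 | exact z30 | exact z31 | exact z32 | exact z34 | exact z35 | exact z36 | exact z40 | exact z41 | exact z42 | exact z43 | exact z45 | exact z46 | exact z50 | exact z51 | exact z52 | exact z53 | exact z54 | exact z56 | exact z60 | exact z61 | exact z62 | exact z63 | exact z64 | exact z65 | exact e11 | exact e22 | exact e33 | exact e44 | exact e55 | exact e66
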